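/- Let q and t = 2r be integers with q ≥ t+1 and r ≥ 1. Define Δ(k) = C(q+1, k-1)*C(q-1, t-k) - C(q, k-2)*C(q, t-k+1) for k in [1, t+1], and define the weight vector α(k) = min(k-1, t+1-k) for k in [1, t+1] (i.e., α = (0, 1, ..., r-1, r, r-1, ..., 1, 0)). Then Σ_{k=1}^{t+1} α(k) * Δ(k) is strictly positive. -/

import Mathlib

lemma keyineq (q a b : ℕ) (hb : b < a) (ha : a < q) :
    q.choose b * (q - 1).choose a < q.choose a * (q - 1).choose b := by
  have hq1 : q - 1 + 1 = q := by omega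
  have h1 : (q - 1).choose a * q = q.choose a * (q - a) := by
    have := Nat.choose_mul_succ_eq (q - 1) a
    rwa [hq1] at this
  have h2 : (q - 1).choose b * q = q.choose b * (q - b) := by
    have := Nat.choose_mul_succ_eq (q - 1) b
    rwa [hq1] at this
  have hca : 0 < (q - 1).choose a := Nat.choose_pos (by omega)
  have hcb : 0 < (q - 1).choose b := Nat.choose_pos (by omega)
  have hqa : 0 < q.choose a := Nat.choose_pos (by omega)
  have key : (q.choose b * (q - 1).choose a) * ((q - a) * (q - b))
      < (q.choose a * (q - 1).choose b) * ((q - a) * (q - b)) := by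
    calc (q.choose b * (q - 1).choose a) * ((q - a) * (q - b))
        = ((q - 1).choose a * (q.choose b * (q - b))) * (q - a) := by ring
      _ = ((q - 1).choose a * ((q - 1).choose b * q)) * (q - a) := by rw [h2]
      _ = ((q - 1).choose b * ((q - 1).choose a * q)) * (q - a) := by ring
      _ = ((q - 1).choose b * (q.choose a * (q - a))) * (q - a) := by rw [h1]
      _ = (q.choose a * ((q - 1).choose b * (q - a))) * (q - a) := by ring
      _ < (q.choose a * ((q - 1).choose b * (q - a))) * (q - b) := by
          exact mul_lt_mul_of_pos_left (by omega)
            (Nat.mul_pos hqa (Nat.mul_pos hcb (by omega)))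
      _ = (q.choose a * (q - 1).choose b) * ((q - a) * (q - b)) := by ring
  exact lt_of_mul_lt_mul_right key (Nat.zero_le _)

lemma tel (n : ℕ) (a G : ℕ → ℤ) :
    ∑ i ∈ Finset.range (n + 1), a (i + 1) * (G (i + 1) - G i)
      = a (n + 1) * G (n + 1) - a 1 * G 0
        + ∑ i ∈ Finset.range n, (a (i + 1) - a (i + 2)) * G (i + 1) := by
  induction n with
  | zero => simp [Finset.sum_range_one]; ring
  | succ m ih =>
      rw [Finset.sum_range_succ, ih, Finset.sum_range_succ]
      ring

theorem stmt_5 (q t r : ℕ) (hr : 1 ≤ r) (ht : t = 2 * r) (hq : t + 1 ≤ q)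
    (Δ : ℕ → ℤ)
    (hΔ : ∀ k, Δ k =
      (if k ≤ t then (Nat.choose (q + 1) (k - 1) * Nat.choose (q - 1) (t - k) : ℤ) else 0)
      - (if 2 ≤ k then (Nat.choose q (k - 2) * Nat.choose q (t + 1 - k) : ℤ) else 0))
    (α : ℕ → ℕ) (hα : ∀ k, α k = min (k - 1) (t + 1 - k)) :
    0 < ∑ k ∈ Finset.Icc 1 (t + 1), (α k : ℤ) * Δ k := by
  subst ht
  set F : ℕ → ℤ := fun k =>
    if 1 ≤ k ∧ k ≤ 2 * r then ((q.choose (k - 1) : ℤ) * ((q - 1).choose (2 * r - k) : ℤ))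
    else 0 with hFdef
  -- Step 1 : Δ k = F k - F (k-1) on the interval
  have hstep : ∀ k ∈ Finset.Icc 1 (2 * r + 1), (α k : ℤ) * Δ k = (α k : ℤ) * (F k - F (k - 1)) := by
    intro k hk
    simp only [Finset.mem_Icc] at hk
    congr 1
    rw [hΔ k]
    have h3 : k = 1 ∨ (2 ≤ k ∧ k ≤ 2 * r) ∨ k = 2 * r + 1 := by omega
    rcases h3 with h | ⟨h2, hk2⟩ | h
    · subst h
      have c1 : (1:ℕ) ≤ 2 * r := by omega
      rw [if_pos c1, if_neg (by omega)]
      simp only [hFdef]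
      rw [if_pos ⟨le_refl 1, c1⟩, if_neg (by omega)]
      norm_num
    · -- middle case
      obtain ⟨a, rfl⟩ : ∃ a, k = a + 2 := ⟨k - 2, by omega⟩
      rw [if_pos hk2, if_pos h2]
      simp only [hFdef]
      rw [if_pos ⟨by omega, hk2⟩, if_pos (⟨by omega, by omega⟩ : 1 ≤ a + 2 - 1 ∧ a + 2 - 1 ≤ 2 * r)]
      obtain ⟨c, rfl⟩ : ∃ c, q = c + 1 := ⟨q - 1, by omega⟩
      have i1 : a + 2 - 1 = a + 1 := by omega
      have i2 : a + 2 - 2 = a := by omega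
      have i3 : 2 * r + 1 - (a + 2) = 2 * r - (a + 2) + 1 := by omega
      have i4 : 2 * r - (a + 1) = 2 * r - (a + 2) + 1 := by omega
      have i5 : a + 1 - 1 = a := by omega
      have i7 : c + 1 - 1 = c := by omega
      rw [i1, i2, i3, i5, i4, i7]
      rw [Nat.choose_succ_succ (c + 1) a, Nat.choose_succ_succ c (2 * r - (a + 2))]
      push_cast
      ring
    · subst h
      rw [if_neg (by omega), if_pos (by omega)]
      simp only [hFdef]
      rw [if_neg (by omega), if_pos (⟨by omega, by omega⟩ : 1 ≤ 2 * r + 1 - 1 ∧ 2 * r + 1 - 1 ≤ 2 * r)]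
      have i1 : 2 * r + 1 - 2 = 2 * r - 1 := by omega
      have i2 : 2 * r + 1 - (2 * r + 1) = 0 := by omega
      have i3 : 2 * r + 1 - 1 = 2 * r := by omega
      have i4 : 2 * r - 2 * r = 0 := by omega
      have i5 : 2 * r - 1 = 2 * r - 1 := rfl
      rw [i1, i2, i3, i4]
      simp
  rw [Finset.sum_congr rfl hstep]
  -- convert to a range sum
  have hIcc : Finset.Icc 1 (2 * r + 1) = Finset.Ico 1 (2 * r + 2) := by
    exact (Finset.Ico_add_one_right_eq_Icc 1 (2 * r + 1)).symm
  rw [hIcc, Finset.sum_Ico_eq_sum_range]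
  have hcongr : ∀ i ∈ Finset.range (2 * r + 2 - 1),
      (α (1 + i) : ℤ) * (F (1 + i) - F (1 + i - 1))
        = (fun j => (α j : ℤ)) (i + 1) * (F (i + 1) - F i) := by
    intro i _
    have e1 : 1 + i = i + 1 := by omega
    have e2 : i + 1 - 1 = i := by omega
    rw [e1, e2]
  rw [Finset.sum_congr rfl hcongr]
  have hn : 2 * r + 2 - 1 = (2 * r) + 1 := by omega
  rw [hn, tel (2 * r) (fun j => (α j : ℤ)) F]
  -- boundary terms vanish
  have hF0 : F 0 = 0 := by simp [hFdef]
  have hFtop : F (2 * r + 1) = 0 := by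
    simp only [hFdef]
    rw [if_neg (by omega)]
  rw [hF0, hFtop]
  simp only [mul_zero, zero_mul, sub_zero, zero_add]
  -- compute the coefficients
  have hcoef : ∀ i ∈ Finset.range (2 * r),
      ((α (i + 1) : ℤ) - (α (i + 2) : ℤ)) * F (i + 1)
        = (if i < r then (-1 : ℤ) else 1) * F (i + 1) := by
    intro i hi
    simp only [Finset.mem_range] at hi
    congr 1
    rw [hα, hα]
    have e1 : i + 1 - 1 = i := by omega
    have e2 : i + 2 - 1 = i + 1 := by omega
    have e3 : 2 * r + 1 - (i + 1) = 2 * r - i := by omega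
    have e4 : 2 * r + 1 - (i + 2) = 2 * r - i - 1 := by omega
    rw [e1, e2, e3, e4]
    rcases lt_or_ge i r with h | h
    · rw [if_pos h, min_eq_left (by omega), min_eq_left (by omega)]
      push_cast
      ring
    · rw [if_neg (by omega), min_eq_right (by omega), min_eq_right (by omega)]
      rw [Nat.cast_sub (by omega : i ≤ 2 * r), Nat.cast_sub (by omega : 1 ≤ 2 * r - i),
        Nat.cast_sub (by omega : i ≤ 2 * r)]
      push_cast
      ring
  rw [Finset.sum_congr rfl hcoef]
  -- split the sum into halves
  have h2r : 2 * r = r + r := by omega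
  rw [h2r, Finset.sum_range_add]
  have hfirst : ∀ i ∈ Finset.range r,
      (if i < r then (-1 : ℤ) else 1) * F (i + 1) = -(F (i + 1)) := by
    intro i hi
    simp only [Finset.mem_range] at hi
    rw [if_pos hi]
    ring
  have hsecond : ∀ i ∈ Finset.range r,
      (if r + i < r then (-1 : ℤ) else 1) * F (r + i + 1) = F (r + i + 1) := by
    intro i _
    rw [if_neg (by omega)]
    ring
  rw [Finset.sum_congr rfl hfirst, Finset.sum_congr rfl hsecond]
  -- reflect the first sum
  have hrefl : ∑ i ∈ Finset.range r, -(F (i + 1)) = ∑ i ∈ Finset.range r, -(F (r - i)) := by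
    rw [← Finset.sum_range_reflect (fun i => -(F (i + 1))) r]
    apply Finset.sum_congr rfl
    intro i hi
    simp only [Finset.mem_range] at hi
    congr 2
    omega
  rw [hrefl, ← Finset.sum_add_distrib]
  apply Finset.sum_pos
  · intro i hi
    simp only [Finset.mem_range] at hi
    have hcond1 : 1 ≤ r - i ∧ r - i ≤ 2 * r := by omega
    have hcond2 : 1 ≤ r + i + 1 ∧ r + i + 1 ≤ 2 * r := by omega
    simp only [hFdef]
    rw [if_pos hcond1, if_pos hcond2]
    have e1 : r - i - 1 = r - i - 1 := rfl
    have e2 : 2 * r - (r - i) = r + i := by omega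
    have e3 : r + i + 1 - 1 = r + i := by omega
    have e4 : 2 * r - (r + i + 1) = r - i - 1 := by omega
    rw [e2, e3, e4]
    have key := keyineq q (r + i) (r - i - 1) (by omega) (by omega)
    have := Int.ofNat_lt.mpr key
    push_cast at this ⊢
    linarith
  · exact ⟨0, Finset.mem_range.mpr hr⟩
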